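/- The group of orientation-preserving automorphisms of Π_{m,n} fixing 0 consists exactly of the multiplication maps x ↦ ηx for η ∈ H; in particular, this group is cyclic of order mn. -/

import Mathlib

/-- The group of orientation-preserving automorphisms of `Π_{m,n}` fixing `0`
consists exactly of the multiplication maps `x ↦ ηx` for `η ∈ H`; in particular, this group is
cyclic of order `mn` (the set `H` is generated by a single element of multiplicative order
`mn`). -/
theorem archdeacon_orientation_preserving_automorphisms
    (m n : ℕ) (hm : 3 ≤ m) (hn : 3 ≤ n) (hmo : Odd m) (hno : Odd n)
    (hcop : Nat.Coprime m n)
    (F : Type*) [Field F] [Fintype F] (hcard : Fintype.card F = 2 * m * n + 1)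
    (ε ξ : F) (hε : orderOf ε = m) (hξ : orderOf ξ = n)
    (H : Set F) (hH : ∀ x : F, x ∈ H ↔ ∃ i < m, ∃ j < n, x = ε ^ i * ξ ^ j)
    (ρ₀ : F → F)
    (hρ : ∀ a : F, (a ∈ H → ρ₀ a = -(ξ * a)) ∧ (a ∉ H → ρ₀ a = -(ε * a))) :
    (∀ σ : F → F, Function.Bijective σ → σ 0 = 0 →
      ((∀ x y : F, x ≠ y → σ (x + ρ₀ (y - x)) = σ x + ρ₀ (σ y - σ x)) ↔
        ∃ η ∈ H, ∀ x : F, σ x = η * x)) ∧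
    (∃ η₀ ∈ H, orderOf η₀ = m * n ∧ ∀ x : F, x ∈ H ↔ ∃ k : ℕ, x = η₀ ^ k) := by
  classical
  have hm0 : 0 < m := by omega
  have hn0 : 0 < n := by omega
  have hmn0 : 0 < m * n := Nat.mul_pos hm0 hn0
  have hmno : Odd (m * n) := hmo.mul hno
  set e : F := ε * ξ with he_def
  have horder : orderOf e = m * n := by
    rw [Commute.orderOf_mul_eq_mul_orderOf_of_coprime (mul_comm ε ξ)
      (by rw [hε, hξ]; exact hcop), hε, hξ]
  have hεpow : ε ^ m = 1 := by rw [← hε]; exact pow_orderOf_eq_one ε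
  have hξpow : ξ ^ n = 1 := by rw [← hξ]; exact pow_orderOf_eq_one ξ
  have hε0 : ε ≠ 0 := by
    rintro rfl
    rw [zero_pow hm0.ne'] at hεpow
    exact one_ne_zero hεpow.symm
  have hξ0 : ξ ≠ 0 := by
    rintro rfl
    rw [zero_pow hn0.ne'] at hξpow
    exact one_ne_zero hξpow.symm
  have he0 : e ≠ 0 := mul_ne_zero hε0 hξ0
  -- ε and ξ are powers of e
  obtain ⟨b, hb⟩ : ∃ b, n * b % m = 1 :=
    (Nat.exists_mul_mod_eq_one_of_coprime hcop.symm (by omega)).imp fun _ h => h.2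
  obtain ⟨a, ha⟩ : ∃ a, m * a % n = 1 :=
    (Nat.exists_mul_mod_eq_one_of_coprime hcop (by omega)).imp fun _ h => h.2
  have hεe : ε = e ^ (n * b) := by
    have h1 : e ^ (n * b) = ε ^ (n * b) * ξ ^ (n * b) := mul_pow ε ξ (n * b)
    have h2 : ξ ^ (n * b) = 1 := by rw [pow_mul, hξpow, one_pow]
    have h3 : ε ^ (n * b) = ε := by
      rw [show n * b = m * (n * b / m) + 1 from by
          have h := Nat.div_add_mod (n * b) m
          omega, pow_add, pow_mul, hεpow,
        one_pow, one_mul, pow_one]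
    rw [h1, h2, h3, mul_one]
  have hξe : ξ = e ^ (m * a) := by
    have h1 : e ^ (m * a) = ε ^ (m * a) * ξ ^ (m * a) := mul_pow ε ξ (m * a)
    have h2 : ε ^ (m * a) = 1 := by rw [pow_mul, hεpow, one_pow]
    have h3 : ξ ^ (m * a) = ξ := by
      rw [show m * a = n * (m * a / n) + 1 from by
          have h := Nat.div_add_mod (m * a) n
          omega, pow_add, pow_mul, hξpow,
        one_pow, one_mul, pow_one]
    rw [h1, h2, h3, one_mul]
  -- H is the set of powers of e
  have hmemH : ∀ x : F, x ∈ H ↔ ∃ k : ℕ, x = e ^ k := by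
    intro x
    constructor
    · intro hx
      obtain ⟨i, hi, j, hj, rfl⟩ := (hH _).1 hx
      exact ⟨n * b * i + m * a * j, by
        rw [hεe, hξe, ← pow_mul, ← pow_mul, ← pow_add]⟩
    · rintro ⟨k, rfl⟩
      refine (hH _).2 ⟨k % m, Nat.mod_lt _ hm0, k % n, Nat.mod_lt _ hn0, ?_⟩
      rw [he_def, mul_pow]
      congr 1
      · rw [← hε]; exact (pow_mod_orderOf ε k).symm
      · rw [← hξ]; exact (pow_mod_orderOf ξ k).symm
  have hpowinj : ∀ i j : ℕ, i < m * n → j < m * n → e ^ i = e ^ j → i = j := by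
    have key : ∀ i j : ℕ, i ≤ j → j < m * n → e ^ i = e ^ j → i = j := by
      intro i j hij hjlt hpow
      have h1 : e ^ i * 1 = e ^ i * e ^ (j - i) := by
        rw [mul_one, ← pow_add, show i + (j - i) = j from by omega]
        exact hpow
      have h2 : e ^ (j - i) = 1 := (mul_left_cancel₀ (pow_ne_zero i he0) h1).symm
      have h3 : m * n ∣ j - i := horder ▸ orderOf_dvd_of_pow_eq_one h2
      rcases Nat.eq_zero_or_pos (j - i) with h4 | h4
      · omega
      · have := Nat.le_of_dvd h4 h3
        omega
    intro i j hi hj hpow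
    rcases le_total i j with h | h
    · exact key i j h hj hpow
    · exact (key j i h hi hpow.symm).symm
  have hpow1 : ∀ k : ℕ, (e ^ k) ^ (m * n) = 1 := by
    intro k
    rw [← pow_mul, mul_comm k (m * n), pow_mul, ← horder, pow_orderOf_eq_one, one_pow]
  -- counting: every (mn)-th root of unity is a power of e
  have hcrit : ∀ x : F, x ^ (m * n) = 1 → ∃ k, x = e ^ k := by
    intro x hx
    have hsub : (Finset.range (m * n)).image (fun k => e ^ k)
        = Polynomial.nthRootsFinset (m * n) (1 : F) := by
      apply Finset.eq_of_subset_of_card_le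
      · intro y hy
        simp only [Finset.mem_image, Finset.mem_range] at hy
        obtain ⟨k, _, rfl⟩ := hy
        exact (Polynomial.mem_nthRootsFinset hmn0 (1 : F)).mpr (hpow1 k)
      · have hcard1 : ((Finset.range (m * n)).image (fun k => e ^ k)).card = m * n := by
          rw [Finset.card_image_of_injOn, Finset.card_range]
          intro i hi j hj hij
          simp only [Finset.coe_range, Set.mem_Iio] at hi hj
          exact hpowinj i j hi hj hij
        rw [hcard1]
        calc (Polynomial.nthRootsFinset (m * n) (1 : F)).card
            ≤ Multiset.card (Polynomial.nthRoots (m * n) (1 : F)) := by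
              rw [Polynomial.nthRootsFinset_def]
              exact Multiset.toFinset_card_le _
          _ ≤ m * n := Polynomial.card_nthRoots _ _
    have hx' : x ∈ Polynomial.nthRootsFinset (m * n) (1 : F) :=
      (Polynomial.mem_nthRootsFinset hmn0 (1 : F)).mpr hx
    rw [← hsub] at hx'
    simp only [Finset.mem_image, Finset.mem_range] at hx'
    obtain ⟨k, _, hk⟩ := hx'
    exact ⟨k, hk.symm⟩
  have hmemiff : ∀ x : F, x ∈ H ↔ x ^ (m * n) = 1 := by
    intro x
    constructor
    · intro hx
      obtain ⟨k, rfl⟩ := (hmemH x).1 hx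
      exact hpow1 k
    · intro hx
      exact (hmemH x).2 (hcrit x hx)
  have hHne0 : ∀ x : F, x ∈ H → x ≠ 0 := by
    intro x hx
    obtain ⟨k, rfl⟩ := (hmemH x).1 hx
    exact pow_ne_zero _ he0
  have hH0 : (0 : F) ∉ H := fun h => hHne0 0 h rfl
  -- characteristic facts
  have hneg1 : (-1 : F) ≠ 1 := by
    intro h
    have h2 : ringChar F = 2 := (neg_one_eq_one_iff).mp h
    have h3 := FiniteField.even_card_iff_char_two.mp h2
    rw [hcard, mul_assoc] at h3
    omega
  have h2ne0 : (2 : F) ≠ 0 := by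
    intro h
    exact hneg1 (by linear_combination -h)
  -- the quadratic character
  have hKpow : ∀ x : F, x ∉ H → x ≠ 0 → x ^ (m * n) = -1 := by
    intro x hxH hx0
    have h2 : (x ^ (m * n)) ^ 2 = 1 := by
      have h := FiniteField.pow_card_sub_one_eq_one x hx0
      rw [hcard] at h
      rw [← pow_mul, show m * n * 2 = 2 * m * n + 1 - 1 from by
        rw [Nat.add_sub_cancel]; ring]
      exact h
    have h3 : (x ^ (m * n) - 1) * (x ^ (m * n) + 1) = 0 := by linear_combination h2
    rcases mul_eq_zero.mp h3 with h | h
    · exact absurd ((hmemiff x).mpr (by linear_combination h)) hxH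
    · linear_combination h
  -- multiplicative rules
  have hmulHH : ∀ u v : F, u ∈ H → v ∈ H → u * v ∈ H := by
    intro u v hu hv
    exact (hmemiff _).mpr
      (by rw [mul_pow, (hmemiff u).mp hu, (hmemiff v).mp hv, one_mul])
  have hmulHK : ∀ u v : F, u ∈ H → v ∉ H → v ≠ 0 → u * v ∉ H := by
    intro u v hu hv hv0 hmem
    have h := (hmemiff _).mp hmem
    rw [mul_pow, (hmemiff u).mp hu, hKpow v hv hv0, one_mul] at h
    exact hneg1 h
  have hmulKK : ∀ u v : F, u ∉ H → v ∉ H → u ≠ 0 → v ≠ 0 → u * v ∈ H := by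
    intro u v hu hv hu0 hv0
    exact (hmemiff _).mpr
      (by rw [mul_pow, hKpow u hu hu0, hKpow v hv hv0]; ring)
  have hnegH : ∀ u : F, u ∈ H → -u ∉ H := by
    intro u hu hmem
    have h := (hmemiff _).mp hmem
    rw [hmno.neg_pow, (hmemiff u).mp hu] at h
    exact hneg1 h
  have hnegK : ∀ u : F, u ∉ H → u ≠ 0 → -u ∈ H := by
    intro u hu hu0
    refine (hmemiff _).mpr ?_
    rw [hmno.neg_pow, hKpow u hu hu0, neg_neg]
  have hinvH : ∀ u : F, u ∈ H → u⁻¹ ∈ H := by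
    intro u hu
    refine (hmemiff _).mpr ?_
    rw [inv_pow, (hmemiff u).mp hu, inv_one]
  have hεH : ε ∈ H := (hH ε).2 ⟨1, by omega, 0, by omega, by simp⟩
  have hξH : ξ ∈ H := (hH ξ).2 ⟨0, by omega, 1, by omega, by simp⟩
  have heH : e ∈ H := hmulHH _ _ hεH hξH
  -- ρ₀ facts
  have hρH : ∀ x : F, x ∈ H → ρ₀ x = -(ξ * x) := fun x hx => (hρ x).1 hx
  have hρK : ∀ x : F, x ∉ H → ρ₀ x = -(ε * x) := fun x hx => (hρ x).2 hx
  have hρ0 : ρ₀ 0 = 0 := by rw [hρK 0 hH0, mul_zero, neg_zero]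
  have hρne : ∀ x : F, x ≠ 0 → ρ₀ x ≠ 0 := by
    intro x hx
    by_cases hxH : x ∈ H
    · rw [hρH x hxH]
      exact neg_ne_zero.mpr (mul_ne_zero hξ0 hx)
    · rw [hρK x hxH]
      exact neg_ne_zero.mpr (mul_ne_zero hε0 hx)
  have hρmul : ∀ η : F, η ∈ H → ∀ x : F, ρ₀ (η * x) = η * ρ₀ x := by
    intro η hη x
    by_cases hx0 : x = 0
    · rw [hx0, mul_zero, hρ0, mul_zero]
    by_cases hxH : x ∈ H
    · rw [hρH _ (hmulHH η x hη hxH), hρH x hxH]; ring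
    · rw [hρK _ (hmulHK η x hη hxH hx0), hρK x hxH]; ring
  have hρsq : ∀ x : F, ρ₀ (ρ₀ x) = e * x := by
    intro x
    by_cases hx0 : x = 0
    · rw [hx0, hρ0, hρ0, mul_zero]
    by_cases hxH : x ∈ H
    · rw [hρH x hxH, hρK _ (hnegH _ (hmulHH ξ x hξH hxH)), he_def]; ring
    · rw [hρK x hxH,
        hρH _ (hnegK (ε * x) (hmulHK ε x hεH hxH hx0) (mul_ne_zero hε0 hx0)), he_def]
      ring
  have hmn_ne : m ≠ n := by
    intro h
    rw [h, Nat.Coprime, Nat.gcd_self] at hcop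
    omega
  have hεξne : ε ≠ ξ := fun h => hmn_ne (by rw [← hε, ← hξ, h])
  refine ⟨?_, e, heH, horder, hmemH⟩
  intro σ hbij hσ0
  constructor
  · -- forward: an orientation-preserving automorphism fixing 0 is multiplication by some η ∈ H
    intro hA
    have hinj := hbij.1
    have hcomm : ∀ x : F, x ≠ 0 → σ (ρ₀ x) = ρ₀ (σ x) := by
      intro x hx
      have h := hA 0 x (Ne.symm hx)
      simpa [hσ0] using h
    set c : F := σ 1 with hc_def
    have hc0 : c ≠ 0 := by
      intro h
      exact one_ne_zero (hinj (h.trans hσ0.symm))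
    have hσe : ∀ x : F, x ≠ 0 → σ (e * x) = e * σ x := by
      intro x hx
      have h1 := hcomm x hx
      have h2 := hcomm (ρ₀ x) (hρne x hx)
      rw [h1, hρsq, hρsq] at h2
      exact h2
    have hσpow : ∀ k : ℕ, σ (e ^ k) = e ^ k * c := by
      intro k
      induction k with
      | zero => simp [hc_def]
      | succ k ih =>
        have h := hσe (e ^ k) (pow_ne_zero _ he0)
        rw [ih] at h
        rw [pow_succ']
        rw [h]
        ring
    have hσH : ∀ x : F, x ∈ H → σ x = c * x := by
      intro x hx
      obtain ⟨k, rfl⟩ := (hmemH x).1 hx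
      rw [hσpow]; ring
    by_cases hcH : c ∈ H
    · refine ⟨c, hcH, ?_⟩
      intro x
      by_cases hx0 : x = 0
      · rw [hx0, hσ0, mul_zero]
      by_cases hxH : x ∈ H
      · exact hσH x hxH
      · have hhH : -(ξ⁻¹ * x) ∈ H :=
          hnegK _ (hmulHK _ _ (hinvH _ hξH) hxH hx0)
            (mul_ne_zero (inv_ne_zero hξ0) hx0)
        have hh0 : -(ξ⁻¹ * x) ≠ 0 := hHne0 _ hhH
        have hρh : ρ₀ (-(ξ⁻¹ * x)) = x := by
          rw [hρH _ hhH]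
          field_simp
        calc σ x = σ (ρ₀ (-(ξ⁻¹ * x))) := by rw [hρh]
          _ = ρ₀ (σ (-(ξ⁻¹ * x))) := hcomm _ hh0
          _ = ρ₀ (c * -(ξ⁻¹ * x)) := by rw [hσH _ hhH]
          _ = c * ρ₀ (-(ξ⁻¹ * x)) := hρmul c hcH _
          _ = c * x := by rw [hρh]
    · exfalso
      set u : F := ξ * ε⁻¹ with hu_def
      have hu0 : u ≠ 0 := mul_ne_zero hξ0 (inv_ne_zero hε0)
      have hu1 : u ≠ 1 := by
        intro h
        exact hεξne ((mul_inv_eq_one₀ hε0).mp h).symm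
      have huH : u ∈ H := hmulHH _ _ hξH (hinvH _ hεH)
      -- σ on the complement of H
      have hσK : ∀ x : F, x ∉ H → x ≠ 0 → σ x = u⁻¹ * c * x := by
        intro x hxH hx0
        have hhH : -(ξ⁻¹ * x) ∈ H :=
          hnegK _ (hmulHK _ _ (hinvH _ hξH) hxH hx0)
            (mul_ne_zero (inv_ne_zero hξ0) hx0)
        have hh0 : -(ξ⁻¹ * x) ≠ 0 := hHne0 _ hhH
        have hρh : ρ₀ (-(ξ⁻¹ * x)) = x := by
          rw [hρH _ hhH]
          field_simp
        have hchK : c * -(ξ⁻¹ * x) ∉ H := by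
          rw [mul_comm]
          exact hmulHK _ _ hhH hcH hc0
        calc σ x = σ (ρ₀ (-(ξ⁻¹ * x))) := by rw [hρh]
          _ = ρ₀ (σ (-(ξ⁻¹ * x))) := hcomm _ hh0
          _ = ρ₀ (c * -(ξ⁻¹ * x)) := by rw [hσH _ hhH]
          _ = -(ε * (c * -(ξ⁻¹ * x))) := hρK _ hchK
          _ = u⁻¹ * c * x := by rw [hu_def]; field_simp
      -- the difference maps
      have hgx : ∀ x : F, ∀ k : ℕ,
          σ (x + e ^ k) = σ x + e ^ k * (σ (x + 1) - σ x) := by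
        intro x
        have key : ∀ k : ℕ,
            σ (x + e ^ k) = σ x + e ^ k * (σ (x + 1) - σ x) →
            σ (x + ρ₀ (e ^ k)) = σ x + ρ₀ (e ^ k * (σ (x + 1) - σ x)) := by
          intro k hk
          have h := hA x (x + e ^ k) (by
            intro hcon
            exact pow_ne_zero k he0 (by linear_combination -hcon))
          simp only [add_sub_cancel_left] at h
          rw [hk] at h
          simpa only [add_sub_cancel_left] using h
        intro k
        induction k with
        | zero => rw [pow_zero, one_mul]; ring
        | succ k ih =>
          have h2 := hA x (x + ρ₀ (e ^ k)) (by
            intro hcon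
            exact hρne _ (pow_ne_zero k he0) (by linear_combination -hcon))
          simp only [add_sub_cancel_left] at h2
          rw [key k ih] at h2
          simp only [add_sub_cancel_left] at h2
          rw [hρsq, hρsq] at h2
          rw [pow_succ']
          linear_combination h2
      have hgx' : ∀ x : F, ∀ k : ℕ,
          σ (x + ρ₀ (e ^ k)) = σ x + ρ₀ (e ^ k * (σ (x + 1) - σ x)) := by
        intro x k
        have h := hA x (x + e ^ k) (by
          intro hcon
          exact pow_ne_zero k he0 (by linear_combination -hcon))
        simp only [add_sub_cancel_left] at h
        rw [hgx x k] at h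
        simpa only [add_sub_cancel_left] using h
      -- the increment on H
      have hstepH : ∀ x : F, x ∈ H → σ (x + 1) = σ x + u * c := by
        intro x hx
        have hx0 : x ≠ 0 := hHne0 x hx
        set d : F := σ (x + 1) - σ x with hd_def
        have hd0 : d ≠ 0 := by
          rw [hd_def]
          intro h
          have h2 : σ (x + 1) = σ x := by linear_combination h
          have h3 := hinj h2
          have : (1 : F) = 0 := by linear_combination h3
          exact one_ne_zero this
        have hxξH : x * ξ⁻¹ ∈ H := hmulHH _ _ hx (hinvH _ hξH)
        obtain ⟨k, hk⟩ := (hmemH _).1 hxξH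
        have h2 := hgx' x k
        rw [← hk] at h2
        rw [hρH _ hxξH] at h2
        rw [show x + -(ξ * (x * ξ⁻¹)) = 0 from by field_simp; ring, hσ0] at h2
        by_cases hdH : d ∈ H
        · -- would force c ∈ H, contradiction
          exfalso
          have hmem : x * ξ⁻¹ * d ∈ H := hmulHH _ _ hxξH hdH
          rw [hρH _ hmem, hσH x hx] at h2
          have h3 : ξ * (x * ξ⁻¹ * d) = x * d := by field_simp
          rw [h3] at h2
          have h4 : x * d = x * c := by linear_combination h2
          have h5 : d = c := mul_left_cancel₀ hx0 h4
          exact hcH (h5 ▸ hdH)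
        · have hmem : x * ξ⁻¹ * d ∉ H := hmulHK _ _ hxξH hdH hd0
          rw [hρK _ hmem, hσH x hx] at h2
          have h4 : ε * (x * ξ⁻¹ * d) = c * x := by linear_combination h2
          have h5 : ε * (x * ξ⁻¹ * d) * ξ = c * x * ξ := by rw [h4]
          have h6 : ξ * ξ⁻¹ = 1 := mul_inv_cancel₀ hξ0
          have h7 : x * (ε * d) = x * (c * ξ) := by
            linear_combination h5 - (ε * x * d) * h6
          have h8 : ε * d = c * ξ := mul_left_cancel₀ hx0 h7
          have h9 : d = u * c := by
            rw [hu_def]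
            field_simp
            linear_combination h8
          have : σ (x + 1) = σ x + d := by rw [hd_def]; ring
          rw [this, h9]
      -- the increment on the complement
      have hstepK : ∀ x : F, x ∉ H → x ≠ 0 → σ (x + 1) = σ x + u⁻¹ * c := by
        intro x hxH hx0
        obtain ⟨k, hk⟩ := (hmemH _).1 (hnegK x hxH hx0)
        have h1 := hgx x k
        rw [← hk] at h1
        rw [show x + -x = (0 : F) from by ring, hσ0] at h1
        rw [hσK x hxH hx0] at h1
        have h7 : x * σ (x + 1) = x * (u⁻¹ * c + u⁻¹ * c * x) := by linear_combination h1
        have h8 := mul_left_cancel₀ hx0 h7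
        rw [hσK x hxH hx0, h8]
        ring
      -- endgame: numerical contradiction
      have h1H : (1 : F) ∈ H := (hmemH 1).2 ⟨0, by rw [pow_zero]⟩
      have s2 : σ 2 = c * 1 + u * c := by
        have h := hstepH 1 h1H
        rw [hσH 1 h1H] at h
        rw [show (2 : F) = 1 + 1 from by norm_num]
        exact h
      by_cases h2H : (2 : F) ∈ H
      · have hE : c * 2 = c * 1 + u * c := by rw [← hσH 2 h2H]; exact s2
        have hE2 : c * 2 = c * (1 + u) := by linear_combination hE
        have hE3 : (2 : F) = 1 + u := mul_left_cancel₀ hc0 hE2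
        exact hu1 (by linear_combination -hE3)
      · have hE : u⁻¹ * c * 2 = c * 1 + u * c := by
          rw [← hσK 2 h2H h2ne0]; exact s2
        have hE1 : u⁻¹ * (c * 2) = c * 1 + u * c := by linear_combination hE
        rw [inv_mul_eq_iff_eq_mul₀ hu0] at hE1
        have hE2 : c * 2 = c * (u + u * u) := by linear_combination hE1
        have hE3 : (2 : F) = u + u * u := mul_left_cancel₀ hc0 hE2
        have hufact : (u - 1) * (u + 2) = 0 := by linear_combination -hE3
        have hu2 : u = -2 := by
          rcases mul_eq_zero.mp hufact with h | h
          · exact absurd (by linear_combination h) hu1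
          · linear_combination h
        have h4ne0 : (4 : F) ≠ 0 := by
          intro h
          have h2 : (2 : F) * 2 = 0 := by linear_combination h
          exact h2ne0 (mul_self_eq_zero.mp h2)
        have h4H : (4 : F) ∈ H := by
          have := hmulKK 2 2 h2H h2H h2ne0 h2ne0
          rwa [show (2 : F) * 2 = 4 from by norm_num] at this
        have s3 : σ 3 = u⁻¹ * c * 2 + u⁻¹ * c := by
          have h := hstepK 2 h2H h2ne0
          rw [hσK 2 h2H h2ne0] at h
          rw [show (3 : F) = 2 + 1 from by norm_num]
          exact h
        by_cases h30 : (3 : F) = 0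
        · exact hu1 (by rw [hu2]; linear_combination -h30)
        by_cases h3H : (3 : F) ∈ H
        · have s4 : σ 4 = u⁻¹ * c * 2 + u⁻¹ * c + u * c := by
            have h := hstepH 3 h3H
            rw [s3] at h
            rw [show (4 : F) = 3 + 1 from by norm_num]
            exact h
          rw [hσH 4 h4H] at s4
          have hE1 : u⁻¹ * (c * 3) = c * 4 - u * c := by linear_combination -s4
          rw [inv_mul_eq_iff_eq_mul₀ hu0] at hE1
          have hE2 : c * 3 = c * (u * 4 - u * u) := by linear_combination hE1
          have hE3 : (3 : F) = u * 4 - u * u := mul_left_cancel₀ hc0 hE2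
          rw [hu2] at hE3
          have h15 : (15 : F) = 0 := by linear_combination hE3
          have h5 : (5 : F) = 0 := by
            have h35 : (3 : F) * 5 = 0 := by linear_combination h15
            rcases mul_eq_zero.mp h35 with h | h
            · exact absurd h h30
            · exact h
          have huu : u * u = -1 := by rw [hu2]; linear_combination h5
          have hupow : u ^ (m * n) = 1 := (hmemiff u).mp huH
          obtain ⟨t, ht⟩ := hmno
          rw [ht] at hupow
          have hsplit : u ^ (2 * t + 1) = (u * u) ^ t * u := by
            rw [pow_succ, pow_mul, sq]
          rw [hsplit, huu] at hupow
          rcases Nat.even_or_odd t with hte | hto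
          · rw [hte.neg_one_pow, one_mul] at hupow
            exact hu1 hupow
          · rw [hto.neg_one_pow] at hupow
            have hum1 : u = -1 := by linear_combination -hupow
            rw [hum1] at huH
            exact (hnegH 1 h1H) (by simpa using huH)
        · have s4 : σ 4 = u⁻¹ * c * 2 + u⁻¹ * c + u⁻¹ * c := by
            have h := hstepK 3 h3H h30
            rw [s3] at h
            rw [show (4 : F) = 3 + 1 from by norm_num]
            exact h
          rw [hσH 4 h4H] at s4
          have hE1 : u⁻¹ * (c * 3) = c * 4 - u⁻¹ * c := by linear_combination -s4
          have hE1' : u⁻¹ * (c * 4) = c * 4 := by linear_combination hE1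
          rw [inv_mul_eq_iff_eq_mul₀ hu0] at hE1'
          have h4c : c * 4 ≠ 0 := mul_ne_zero hc0 h4ne0
          have : (1 : F) * (c * 4) = u * (c * 4) := by linear_combination hE1'
          exact hu1 (mul_right_cancel₀ h4c this).symm
  · -- backward: multiplication by η ∈ H is orientation preserving
    rintro ⟨η, hη, hσ⟩ x y _
    rw [hσ, hσ, hσ, ← mul_sub, hρmul η hη, mul_add]
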